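/- Let G(x,y) be the graph on vertices u_0,...,u_b, v_0,...,v_b where: u_0 u_i is an edge iff x_i = 1, v_0 v_i is an edge iff y_i = 0, and u_j v_j is an edge for all 0 ≤ j ≤ b. Then G(x,y) is a spanning tree (on its 2b+2 vertices) if and only if x = y. -/

import Mathlib

lemma walk_closed {V : Type*} {G : SimpleGraph V} {S : V → Prop}
    (h : ∀ a b, G.Adj a b → S a → S b) : ∀ {u v} (p : G.Walk u v), S u → S v := by
  intro u v p
  induction p with
  | nil => exact id
  | cons hadj _ ih => exact fun hu => ih (h _ _ hadj hu)

lemma closed_not_reachable {V : Type*} {G : SimpleGraph V} {S : V → Prop}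
    (h : ∀ a b, G.Adj a b → S a → S b) {u v} (hu : S u) (hv : ¬ S v) :
    ¬ G.Reachable u v := fun ⟨p⟩ => hv (walk_closed h p hu)

/-- The graph `G(x,y)` on vertices `u_0,…,u_b` (as `(false, j)`) and `v_0,…,v_b`
(as `(true, j)`), with edges `u_0 u_i` iff `x i = 1`, `v_0 v_i` iff `y i = 0`,
and `u_j v_j` for all `0 ≤ j ≤ b`.  (Here `i : Fin b` names index `i+1 ∈ {1,…,b}`.) -/
def eqGraph (b : ℕ) (x y : Fin b → Bool) : SimpleGraph (Bool × Fin (b + 1)) :=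
  SimpleGraph.fromRel (fun a c =>
    (∃ i : Fin b, a = (false, 0) ∧ c = (false, i.succ) ∧ x i = true) ∨
    (∃ i : Fin b, a = (true, 0) ∧ c = (true, i.succ) ∧ y i = false) ∨
    (∃ j : Fin (b + 1), a = (false, j) ∧ c = (true, j)))

lemma eqGraph_adj {b : ℕ} {x y : Fin b → Bool} {a c : Bool × Fin (b+1)} :
    (eqGraph b x y).Adj a c ↔ a ≠ c ∧
      ((∃ i : Fin b, (a = (false, 0) ∧ c = (false, i.succ) ∨ c = (false, 0) ∧ a = (false, i.succ)) ∧ x i = true) ∨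
       (∃ i : Fin b, (a = (true, 0) ∧ c = (true, i.succ) ∨ c = (true, 0) ∧ a = (true, i.succ)) ∧ y i = false) ∨
       (∃ j : Fin (b + 1), a = (false, j) ∧ c = (true, j) ∨ c = (false, j) ∧ a = (true, j))) := by
  rw [eqGraph, SimpleGraph.fromRel_adj]
  constructor
  · rintro ⟨hne, h | h⟩ <;>
    · rcases h with ⟨i, h1, h2, h3⟩ | ⟨i, h1, h2, h3⟩ | ⟨j, h1, h2⟩
      · exact ⟨hne, Or.inl ⟨i, by tauto, h3⟩⟩
      · exact ⟨hne, Or.inr (Or.inl ⟨i, by tauto, h3⟩)⟩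
      · exact ⟨hne, Or.inr (Or.inr ⟨j, by tauto⟩)⟩
  · rintro ⟨hne, h⟩
    refine ⟨hne, ?_⟩
    rcases h with ⟨i, h1 | h1, h3⟩ | ⟨i, h1 | h1, h3⟩ | ⟨j, h1 | h1⟩
    · exact Or.inl (Or.inl ⟨i, h1.1, h1.2, h3⟩)
    · exact Or.inr (Or.inl ⟨i, h1.1, h1.2, h3⟩)
    · exact Or.inl (Or.inr (Or.inl ⟨i, h1.1, h1.2, h3⟩))
    · exact Or.inr (Or.inr (Or.inl ⟨i, h1.1, h1.2, h3⟩))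
    · exact Or.inl (Or.inr (Or.inr ⟨j, h1.1, h1.2⟩))
    · exact Or.inr (Or.inr (Or.inr ⟨j, h1.1, h1.2⟩))

lemma adj_rung {b : ℕ} {x y : Fin b → Bool} (j : Fin (b+1)) :
    (eqGraph b x y).Adj (false, j) (true, j) := by
  rw [eqGraph_adj]
  exact ⟨by simp, Or.inr (Or.inr ⟨j, Or.inl ⟨rfl, rfl⟩⟩)⟩

lemma adj_u {b : ℕ} {x y : Fin b → Bool} {i : Fin b} (h : x i = true) :
    (eqGraph b x y).Adj (false, 0) (false, i.succ) := by
  rw [eqGraph_adj]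
  exact ⟨by simp [(Fin.succ_ne_zero i).symm], Or.inl ⟨i, Or.inl ⟨rfl, rfl⟩, h⟩⟩

lemma adj_v {b : ℕ} {x y : Fin b → Bool} {i : Fin b} (h : y i = false) :
    (eqGraph b x y).Adj (true, 0) (true, i.succ) := by
  rw [eqGraph_adj]
  exact ⟨by simp [(Fin.succ_ne_zero i).symm], Or.inr (Or.inl ⟨i, Or.inl ⟨rfl, rfl⟩, h⟩)⟩

lemma reach_root {b : ℕ} {x : Fin b → Bool} (v : Bool × Fin (b+1)) :
    (eqGraph b x x).Reachable v (false, 0) := by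
  obtain ⟨bv, j⟩ := v
  have key : ∀ j : Fin (b+1), (eqGraph b x x).Reachable (false, j) (false, 0) := by
    intro j
    induction j using Fin.cases with
    | zero => rfl
    | succ i =>
      by_cases h : x i = true
      · exact (adj_u h).symm.reachable
      · have h' : x i = false := by simpa using h
        exact ((adj_rung i.succ).reachable.trans (adj_v h').symm.reachable).trans
          (adj_rung (0 : Fin (b+1))).symm.reachable
  cases bv
  · exact key j
  · exact ((adj_rung j).symm.reachable).trans (key j)

lemma eqGraph_connected {b : ℕ} {x : Fin b → Bool} : (eqGraph b x x).Connected := by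
  exact SimpleGraph.Connected.mk (fun u v => (reach_root u).trans (reach_root v).symm)

open SimpleGraph in
lemma L1 {b : ℕ} {x : Fin b → Bool} {i : Fin b} (hx : x i = true) :
    ¬ (eqGraph b x x \ SimpleGraph.fromEdgeSet {s((false,0),((false : Bool), i.succ))}).Reachable
      (false,0) (false,i.succ) := by
  intro hr
  refine closed_not_reachable (S := fun v => v = (false,i.succ) ∨ v = (true,i.succ))
    ?_ ?_ ?_ hr.symm
  · intro a c hadj hSa
    rw [SimpleGraph.sdiff_adj, SimpleGraph.fromEdgeSet_adj] at hadj
    obtain ⟨hadj, hdel⟩ := hadj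
    have hne := hadj.ne
    rw [eqGraph_adj] at hadj
    rcases hSa with rfl | rfl <;>
      rcases hadj.2 with ⟨k, ⟨h1,h2⟩|⟨h1,h2⟩, h3⟩ | ⟨k, ⟨h1,h2⟩|⟨h1,h2⟩, h3⟩ | ⟨j, ⟨h1,h2⟩|⟨h1,h2⟩⟩ <;>
      simp_all [Sym2.eq_iff, Fin.succ_ne_zero, (Fin.succ_ne_zero _).symm, Prod.ext_iff]
  · exact Or.inl rfl
  · simp [Prod.ext_iff, (Fin.succ_ne_zero i).symm]

open SimpleGraph in
lemma L2 {b : ℕ} {x : Fin b → Bool} {i : Fin b} (hx : x i = false) :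
    ¬ (eqGraph b x x \ SimpleGraph.fromEdgeSet {s((true,0),((true : Bool), i.succ))}).Reachable
      (true,0) (true,i.succ) := by
  intro hr
  refine closed_not_reachable (S := fun v => v = (false,i.succ) ∨ v = (true,i.succ))
    ?_ ?_ ?_ hr.symm
  · intro a c hadj hSa
    rw [SimpleGraph.sdiff_adj, SimpleGraph.fromEdgeSet_adj] at hadj
    obtain ⟨hadj, hdel⟩ := hadj
    have hne := hadj.ne
    rw [eqGraph_adj] at hadj
    rcases hSa with rfl | rfl <;>
      rcases hadj.2 with ⟨k, ⟨h1,h2⟩|⟨h1,h2⟩, h3⟩ | ⟨k, ⟨h1,h2⟩|⟨h1,h2⟩, h3⟩ | ⟨j, ⟨h1,h2⟩|⟨h1,h2⟩⟩ <;>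
      simp_all [Sym2.eq_iff, Fin.succ_ne_zero, (Fin.succ_ne_zero _).symm, Prod.ext_iff]
  · exact Or.inr rfl
  · simp [Prod.ext_iff, (Fin.succ_ne_zero i).symm]

open SimpleGraph in
lemma L3a {b : ℕ} {x : Fin b → Bool} :
    ¬ (eqGraph b x x \ SimpleGraph.fromEdgeSet {s(((false : Bool),(0 : Fin (b+1))),(true,0))}).Reachable
      (false,0) (true,0) := by
  refine closed_not_reachable
    (S := fun v => v = (false,0) ∨ ∃ k : Fin b, x k = true ∧ (v = (false,k.succ) ∨ v = (true,k.succ)))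
    ?_ (Or.inl rfl) ?_
  · intro a c hadj hSa
    rw [SimpleGraph.sdiff_adj, SimpleGraph.fromEdgeSet_adj] at hadj
    obtain ⟨hadj, hdel⟩ := hadj
    have hne := hadj.ne
    rw [eqGraph_adj] at hadj
    rcases hSa with rfl | ⟨k0, hxk, rfl | rfl⟩ <;>
      rcases hadj.2 with ⟨k, ⟨h1,h2⟩|⟨h1,h2⟩, h3⟩ | ⟨k, ⟨h1,h2⟩|⟨h1,h2⟩, h3⟩ | ⟨j, ⟨h1,h2⟩|⟨h1,h2⟩⟩ <;>
      simp_all [Sym2.eq_iff, Fin.succ_ne_zero, (Fin.succ_ne_zero _).symm, Prod.ext_iff] <;>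
      tauto
  · simp [Prod.ext_iff, Fin.succ_ne_zero, (Fin.succ_ne_zero _).symm]

open SimpleGraph in
lemma L3b {b : ℕ} {x : Fin b → Bool} {k : Fin b} (hx : x k = true) :
    ¬ (eqGraph b x x \ SimpleGraph.fromEdgeSet {s(((false : Bool), k.succ),(true,k.succ))}).Reachable
      (false,k.succ) (true,k.succ) := by
  intro hr
  refine closed_not_reachable (S := fun v => v = (true,k.succ)) ?_ rfl ?_ hr.symm
  · intro a c hadj hSa
    rw [SimpleGraph.sdiff_adj, SimpleGraph.fromEdgeSet_adj] at hadj
    obtain ⟨hadj, hdel⟩ := hadj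
    have hne := hadj.ne
    rw [eqGraph_adj] at hadj
    rcases hSa with rfl <;>
      rcases hadj.2 with ⟨k', ⟨h1,h2⟩|⟨h1,h2⟩, h3⟩ | ⟨k', ⟨h1,h2⟩|⟨h1,h2⟩, h3⟩ | ⟨j, ⟨h1,h2⟩|⟨h1,h2⟩⟩ <;>
      simp_all [Sym2.eq_iff, Fin.succ_ne_zero, (Fin.succ_ne_zero _).symm, Prod.ext_iff, Fin.succ_inj]
  · simp [Prod.ext_iff]

open SimpleGraph in
lemma L3c {b : ℕ} {x : Fin b → Bool} {k : Fin b} (hx : x k = false) :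
    ¬ (eqGraph b x x \ SimpleGraph.fromEdgeSet {s(((false : Bool), k.succ),(true,k.succ))}).Reachable
      (false,k.succ) (true,k.succ) := by
  refine closed_not_reachable (S := fun v => v = (false,k.succ)) ?_ rfl ?_
  · intro a c hadj hSa
    rw [SimpleGraph.sdiff_adj, SimpleGraph.fromEdgeSet_adj] at hadj
    obtain ⟨hadj, hdel⟩ := hadj
    have hne := hadj.ne
    rw [eqGraph_adj] at hadj
    rcases hSa with rfl <;>
      rcases hadj.2 with ⟨k', ⟨h1,h2⟩|⟨h1,h2⟩, h3⟩ | ⟨k', ⟨h1,h2⟩|⟨h1,h2⟩, h3⟩ | ⟨j, ⟨h1,h2⟩|⟨h1,h2⟩⟩ <;>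
      simp_all [Sym2.eq_iff, Fin.succ_ne_zero, (Fin.succ_ne_zero _).symm, Prod.ext_iff, Fin.succ_inj]
  · simp [Prod.ext_iff]

lemma eqGraph_acyclic {b : ℕ} {x : Fin b → Bool} : (eqGraph b x x).IsAcyclic := by
  rw [SimpleGraph.isAcyclic_iff_forall_adj_isBridge]
  intro v w hvw
  rw [SimpleGraph.isBridge_iff]
  rw [eqGraph_adj] at hvw
  rcases hvw.2 with ⟨k, ⟨h1,h2⟩|⟨h1,h2⟩, h3⟩ | ⟨k, ⟨h1,h2⟩|⟨h1,h2⟩, h3⟩ | ⟨j, ⟨h1,h2⟩|⟨h1,h2⟩⟩ <;>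
    subst h1 <;> subst h2
  · exact L1 h3
  · rw [Sym2.eq_swap]; exact fun hr => L1 h3 hr.symm
  · exact L2 h3
  · rw [Sym2.eq_swap]; exact fun hr => L2 h3 hr.symm
  · induction j using Fin.cases with
    | zero => exact L3a
    | succ k =>
      cases hxk : x k
      · exact L3c hxk
      · exact L3b hxk
  · induction j using Fin.cases with
    | zero => rw [Sym2.eq_swap]; exact fun hr => L3a hr.symm
    | succ k =>
      rw [Sym2.eq_swap]
      cases hxk : x k
      · exact fun hr => L3c hxk hr.symm
      · exact fun hr => L3b hxk hr.symm

lemma forward_ne_false {b : ℕ} {x y : Fin b → Bool} {i : Fin b}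
    (hx : x i = false) (hy : y i = true) : ¬ (eqGraph b x y).Connected := by
  intro hc
  refine closed_not_reachable
    (S := fun v => v = ((false : Bool), i.succ) ∨ v = (true, i.succ)) ?_ (Or.inl rfl)
    (v := ((false : Bool), (0 : Fin (b+1)))) ?_ (hc.preconnected _ _)
  · intro a c hadj hSa
    rw [eqGraph_adj] at hadj
    rcases hSa with rfl | rfl <;>
      rcases hadj.2 with ⟨k, ⟨h1,h2⟩|⟨h1,h2⟩, h3⟩ | ⟨k, ⟨h1,h2⟩|⟨h1,h2⟩, h3⟩ | ⟨j, ⟨h1,h2⟩|⟨h1,h2⟩⟩ <;>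
      simp_all [Fin.succ_ne_zero, (Fin.succ_ne_zero _).symm, Prod.ext_iff, Fin.succ_inj]
  · simp [Prod.ext_iff, (Fin.succ_ne_zero i).symm]

lemma forward_ne_true {b : ℕ} {x y : Fin b → Bool} {i : Fin b}
    (hx : x i = true) (hy : y i = false) : ¬ (eqGraph b x y).IsAcyclic := by
  intro ha
  have h1 : (eqGraph b x y).Adj (false,0) (false,i.succ) := adj_u hx
  have h2 : (eqGraph b x y).Adj (false,i.succ) (true,i.succ) := adj_rung i.succ
  have h3 : (eqGraph b x y).Adj (true,i.succ) (true,0) := (adj_v hy).symm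
  have h4 : (eqGraph b x y).Adj (true,0) (false,0) := (adj_rung 0).symm
  refine ha (SimpleGraph.Walk.cons h1 (SimpleGraph.Walk.cons h2
    (SimpleGraph.Walk.cons h3 (SimpleGraph.Walk.cons h4 SimpleGraph.Walk.nil)))) ?_
  simp [SimpleGraph.Walk.isCycle_def, SimpleGraph.Walk.isTrail_def, Sym2.eq_iff,
    Prod.ext_iff, Fin.succ_ne_zero, (Fin.succ_ne_zero _).symm]

/-- `G(x,y)` is a spanning tree on its `2b+2` vertices iff `x = y`. -/
theorem stmt_7 (b : ℕ) (x y : Fin b → Bool) :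
    (eqGraph b x y).IsTree ↔ x = y := by
  constructor
  · intro hT
    funext i
    cases hx : x i <;> cases hy : y i
    · rfl
    · exact absurd hT.isConnected (forward_ne_false hx hy)
    · exact absurd hT.IsAcyclic (forward_ne_true hx hy)
    · rfl
  · rintro rfl
    exact ⟨eqGraph_connected, eqGraph_acyclic⟩
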